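/- Let 𝒫 be a finite family of finite subsets of ℕ, and let 𝒳 ⊆ 𝒫 be of maximum size among subfamilies satisfying |⋃_{A∈𝒳} A| < |𝒳| (taking 𝒳 = ∅ if no such subfamily exists). Let 𝒢 = ⋃_{A∈𝒳} A and 𝒴 = 𝒫 \ 𝒳. Then for every nonempty 𝒮 ⊆ 𝒴, |(⋃_{A∈𝒮} A) \ 𝒢| ≥ |𝒮|. -/
import Mathlib


theorem stmt_7 (P X : Finset (Finset ℕ)) (hXP : X ⊆ P)
    (hX : X = ∅ ∨ (X.biUnion id).card < X.card)
    (hmax : ∀ Z ⊆ P, (Z.biUnion id).card < Z.card → Z.card ≤ X.card) :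
    ∀ S ⊆ P \ X, S.Nonempty →
      S.card ≤ ((S.biUnion id) \ (X.biUnion id)).card := by
  intro S hS hSne
  by_contra hlt
  push_neg at hlt
  have hdisj : Disjoint X S := by
    rw [Finset.disjoint_right]
    intro a ha
    exact (Finset.mem_sdiff.mp (hS ha)).2
  have hGle : (X.biUnion id).card ≤ X.card := by
    rcases hX with h | h
    · simp [h]
    · exact h.le
  set Z := X ∪ S with hZ
  have hZP : Z ⊆ P := Finset.union_subset hXP (hS.trans (Finset.sdiff_subset))
  have hZcard : Z.card = X.card + S.card := Finset.card_union_of_disjoint hdisj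
  have hbi : Z.biUnion id = S.biUnion id ∪ X.biUnion id := by
    ext a
    simp only [hZ, Finset.mem_union, Finset.mem_biUnion]
    aesop
  have hcount : (Z.biUnion id).card < Z.card := by
    rw [hbi, ← Finset.card_sdiff_add_card, hZcard]
    omega
  have := hmax Z hZP hcount
  rw [hZcard] at this
  have : S.card = 0 := by omega
  exact absurd (Finset.card_eq_zero.mp this) (Finset.nonempty_iff_ne_empty.mp hSne)
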